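/- Let A be an associative unital F-algebra, p ∈ F^× with p^r ≠ 1 for 1 ≤ r ≤ t+s, and M ∈ A, c ∈ ℤ. Then (M ; c choose t)_p · (M ; c−t choose s)_p = binom(t+s, t)_p · (M ; c choose t+s)_p, where binom(t+s,t)_p ∈ F is the Gaussian binomial coefficient. -/
import Mathlib


/-- The `p`-binomial coefficient `(M ; c choose n)_p := ∏_{r=1}^n (p^{c+1-r} M − 1)/(p^r − 1)`
in an `F`-algebra `A`, for a unit `p` of the field `F`. -/
noncomputable def pbinom {F A : Type*} [Field F] [Ring A] [Algebra F A]
    (p : Fˣ) (M : A) (c : ℤ) : ℕ → A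
  | 0 => 1
  | n + 1 =>
      pbinom p M c n *
        (((p : F) ^ (n + 1) - 1)⁻¹ • (((p ^ (c - (n : ℤ)) : Fˣ) : F) • M - 1))

/-- The one-sided `p`-integer `(s)_p = 1 + p + ⋯ + p^{s-1}`. -/
def qInt {F : Type*} [Field F] (p : F) (s : ℕ) : F := ∑ t ∈ Finset.range s, p ^ t

/-- The one-sided `p`-factorial `(m)_p! = ∏_{s=1}^m (s)_p`. -/
def qFac {F : Type*} [Field F] (p : F) (m : ℕ) : F := ∏ s ∈ Finset.range m, qInt p (s + 1)

/-- The scalar Gaussian binomial coefficient `binom(a,b)_p = (a)_p!/((b)_p!(a-b)_p!)` in `F`. -/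
noncomputable def gbinomF {F : Type*} [Field F] (p : F) (a b : ℕ) : F :=
  qFac p a / (qFac p b * qFac p (a - b))

/-- Auxiliary unnormalized product `∏_{k=0}^{n-1} (p^{c-k} M − 1)`. -/
noncomputable def Qprod {F A : Type*} [Field F] [Ring A] [Algebra F A]
    (p : Fˣ) (M : A) (c : ℤ) : ℕ → A
  | 0 => 1
  | n + 1 => Qprod p M c n * (((p ^ (c - (n : ℤ)) : Fˣ) : F) • M - 1)

lemma Qprod_add {F A : Type*} [Field F] [Ring A] [Algebra F A]
    (p : Fˣ) (M : A) (c : ℤ) (t s : ℕ) :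
    Qprod p M c (t + s) = Qprod p M c t * Qprod p M (c - (t : ℤ)) s := by
  induction s with
  | zero => simp [Qprod]
  | succ s ih =>
    have hexp : c - ((t + s : ℕ) : ℤ) = (c - (t : ℤ)) - (s : ℤ) := by push_cast; ring
    show Qprod p M c (t + s) * (((p ^ (c - ((t + s : ℕ) : ℤ)) : Fˣ) : F) • M - 1) = _
    rw [hexp, ih, mul_assoc]
    rfl

lemma pbinom_eq {F A : Type*} [Field F] [Ring A] [Algebra F A]
    (p : Fˣ) (M : A) (c : ℤ) (n : ℕ) :
    pbinom p M c n =
      (∏ k ∈ Finset.range n, ((p : F) ^ (k + 1) - 1)⁻¹) • Qprod p M c n := by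
  induction n with
  | zero => simp [pbinom, Qprod]
  | succ n ih =>
    show pbinom p M c n * _ = _
    rw [ih, Finset.prod_range_succ, smul_mul_smul_comm]
    rfl

/-- `(M ; c choose t)_p (M ; c−t choose s)_p = binom(t+s, t)_p (M ; c choose t+s)_p`. -/
theorem pbinom_mul_pbinom {F A : Type*} [Field F] [Ring A] [Algebra F A]
    (p : Fˣ) (t s : ℕ) (hp : ∀ r : ℕ, 1 ≤ r → r ≤ t + s → (p : F) ^ r ≠ 1)
    (M : A) (c : ℤ) :
    pbinom p M c t * pbinom p M (c - (t : ℤ)) s =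
      gbinomF (p : F) (t + s) t • pbinom p M c (t + s) := by
  rcases Nat.eq_zero_or_pos (t + s) with h0 | hpos
  · obtain ⟨ht, hs⟩ := Nat.add_eq_zero.mp h0
    subst ht; subst hs
    simp [pbinom, gbinomF, qFac]
  set q : F := (p : F) with hq
  have hq1 : q - 1 ≠ 0 := by
    have := hp 1 le_rfl hpos
    simpa [sub_ne_zero] using this
  have hfac : ∀ k, k < t + s → q ^ (k + 1) - 1 ≠ 0 := fun k hk =>
    sub_ne_zero.mpr (hp (k + 1) (Nat.succ_le_succ (Nat.zero_le _)) hk)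
  have hqInt : ∀ k, k < t + s → qInt q (k + 1) ≠ 0 := by
    intro k hk h
    apply hfac k hk
    rw [← geom_sum_mul q (k + 1)]
    rw [qInt] at h
    rw [h, zero_mul]
  have hqFac : ∀ n, n ≤ t + s → qFac q n ≠ 0 := by
    intro n hn
    rw [qFac]
    exact Finset.prod_ne_zero_iff.mpr fun k hk =>
      hqInt k (lt_of_lt_of_le (Finset.mem_range.mp hk) hn)
  have he : ∀ n, (∏ k ∈ Finset.range n, (q ^ (k + 1) - 1)) =
      qFac q n * (q - 1) ^ n := by
    intro n
    have hstep : ∀ k ∈ Finset.range n, q ^ (k + 1) - 1 = qInt q (k + 1) * (q - 1) :=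
      fun k _ => (geom_sum_mul q (k + 1)).symm
    rw [Finset.prod_congr rfl hstep, Finset.prod_mul_distrib, Finset.prod_const,
      Finset.card_range, qFac]
  rw [pbinom_eq p M c t, pbinom_eq p M _ s, pbinom_eq p M c (t + s),
    smul_mul_smul_comm, ← Qprod_add, smul_smul]
  congr 1
  rw [Finset.prod_inv_distrib, Finset.prod_inv_distrib, Finset.prod_inv_distrib]
  rw [show ((p : F)) = q from rfl] -- align
  rw [he, he, he, gbinomF, Nat.add_sub_cancel_left]
  have h1 := hqFac t (Nat.le_add_right t s)
  have h2 := hqFac s (Nat.le_add_left s t)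
  have h3 := hqFac (t + s) le_rfl
  field_simp
  ring
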